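/- Let Q be a connected Laplacian matrix on V = {0,…,n}. The set of extreme points of the Delaunay polytope H_{Del_G}(O) is exactly {u_S : ∅ ≠ S ⊊ V}, the map S ↦ u_S is injective on nonempty proper subsets of V, and consequently H_{Del_G}(O) has exactly 2^{n+1} − 2 extreme points (vertices). -/

import Mathlib

open Finset Matrix

/-- A Laplacian matrix of a multigraph on vertex set `Fin (n+1)`:
symmetric, nonpositive off-diagonal entries, all row sums zero. -/
def IsLaplacian (n : ℕ) (Q : Matrix (Fin (n+1)) (Fin (n+1)) ℤ) : Prop :=
  (∀ i j, Q i j = Q j i) ∧ (∀ i j, i ≠ j → Q i j ≤ 0) ∧ (∀ i, ∑ j, Q i j = 0)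

/-- A connected Laplacian matrix: the graph with an edge `{i,j}` whenever
`b_{ij} = -Q i j > 0` is connected. -/
def IsConnectedLaplacian (n : ℕ) (Q : Matrix (Fin (n+1)) (Fin (n+1)) ℤ) : Prop :=
  IsLaplacian n Q ∧ (SimpleGraph.fromRel (fun i j => Q i j ≠ 0)).Connected

/-- The Laplacian lattice: the subgroup of `ℤ^{n+1}` generated by the rows of `Q`. -/
noncomputable def lapLattice (n : ℕ) (Q : Matrix (Fin (n+1)) (Fin (n+1)) ℤ) :
    AddSubgroup (Fin (n+1) → ℤ) :=
  AddSubgroup.closure (Set.range fun i => Q i)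

/-- The hyperplane `H_0 = {x ∈ ℝ^{n+1} : ∑ x i = 0}`. -/
def H0 (n : ℕ) : Set (Fin (n+1) → ℝ) := {x | ∑ i, x i = 0}

/-- The simplicial distance function on `H_0`: `d_△(p,q) = max_i (p i - q i)`. -/
noncomputable def simpDist (n : ℕ) (p q : Fin (n+1) → ℝ) : ℝ :=
  Finset.univ.sup' Finset.univ_nonempty fun i => p i - q i

/-- Coercion of an integer vector to a real vector. -/
noncomputable def intVec (n : ℕ) (q : Fin (n+1) → ℤ) : Fin (n+1) → ℝ := fun i => (q i : ℝ)

/-- The root lattice `A_n = {x ∈ ℤ^{n+1} : ∑ x i = 0}`. -/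
def rootLattice (n : ℕ) : AddSubgroup (Fin (n+1) → ℤ) where
  carrier := {x | ∑ i, x i = 0}
  add_mem' := by
    intro a b ha hb
    simp only [Set.mem_setOf_eq, Pi.add_apply, Finset.sum_add_distrib] at *
    omega
  zero_mem' := by simp
  neg_mem' := by
    intro a ha
    simp only [Set.mem_setOf_eq, Pi.neg_apply, Finset.sum_neg_distrib] at *
    omega

/-- The `i`-th row of `Q` as a real vector. -/
noncomputable def rowVec (n : ℕ) (Q : Matrix (Fin (n+1)) (Fin (n+1)) ℤ) (i : Fin (n+1)) :
    Fin (n+1) → ℝ := fun j => (Q i j : ℝ)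

/-- `u^σ_k = b_{σ(0)} + ⋯ + b_{σ(k)}`. -/
noncomputable def uPerm (n : ℕ) (Q : Matrix (Fin (n+1)) (Fin (n+1)) ℤ)
    (σ : Equiv.Perm (Fin (n+1))) (k : Fin (n+1)) : Fin (n+1) → ℝ :=
  ∑ j ∈ Finset.Iic k, rowVec n Q (σ j)

/-- The Delaunay polytope of the origin: the union over all permutations `σ`
of the simplices `△_σ = conv{u^σ_0, …, u^σ_n}`. -/
noncomputable def HDel (n : ℕ) (Q : Matrix (Fin (n+1)) (Fin (n+1)) ℤ) :
    Set (Fin (n+1) → ℝ) :=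
  ⋃ σ : Equiv.Perm (Fin (n+1)), convexHull ℝ (Set.range (uPerm n Q σ))

/-- `u_S = ∑_{i ∈ S} b_i`, as a real vector. -/
noncomputable def uCut (n : ℕ) (Q : Matrix (Fin (n+1)) (Fin (n+1)) ℤ)
    (S : Finset (Fin (n+1))) : Fin (n+1) → ℝ := ∑ i ∈ S, rowVec n Q i


section DelAuxSection
namespace DelAux

variable {n : ℕ} {Q : Matrix (Fin (n+1)) (Fin (n+1)) ℤ}

/-- The real matrix. -/
noncomputable def Mr (n : ℕ) (Q : Matrix (Fin (n+1)) (Fin (n+1)) ℤ) :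
    Matrix (Fin (n+1)) (Fin (n+1)) ℝ := Matrix.of fun i j => ((Q i j : ℤ) : ℝ)

lemma Mr_apply (i j : Fin (n+1)) : Mr n Q i j = (Q i j : ℝ) := rfl

lemma rowSum (hQ : IsConnectedLaplacian n Q) (i : Fin (n+1)) :
    ∑ j, Mr n Q i j = 0 := by
  have := hQ.1.2.2 i
  have : ((∑ j, Q i j : ℤ) : ℝ) = 0 := by rw [this]; simp
  simpa [Mr_apply] using this

lemma colSum (hQ : IsConnectedLaplacian n Q) (j : Fin (n+1)) :
    ∑ i, Mr n Q i j = 0 := by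
  have h : ∀ i, Mr n Q i j = Mr n Q j i := by
    intro i; simp [Mr_apply, hQ.1.1 i j]
  rw [Finset.sum_congr rfl (fun i _ => h i)]
  exact rowSum hQ j

/-- Maximum principle: kernel vectors are constant. -/
lemma ker_const (hQ : IsConnectedLaplacian n Q) (x : Fin (n+1) → ℝ)
    (hx : Mr n Q *ᵥ x = 0) (a b : Fin (n+1)) : x a = x b := by
  obtain ⟨i0, -, hi0⟩ := Finset.exists_max_image Finset.univ x ⟨0, Finset.mem_univ 0⟩
  set mx := x i0 with hmx
  -- local step
  have step : ∀ c : Fin (n+1), x c = mx → ∀ d : Fin (n+1), Q c d ≠ 0 → x d = mx := by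
    intro c hc d hd
    have hrow : ∑ j, Mr n Q c j * x j = 0 := by
      have := congrFun hx c
      simpa [Matrix.mulVec, dotProduct] using this
    have hzero : ∑ j, Mr n Q c j * (x j - mx) = 0 := by
      have hsum := rowSum hQ c
      have : ∑ j, Mr n Q c j * (x j - mx) =
          (∑ j, Mr n Q c j * x j) - mx * ∑ j, Mr n Q c j := by
        rw [Finset.mul_sum, ← Finset.sum_sub_distrib]
        exact Finset.sum_congr rfl (fun j _ => by ring)
      rw [this, hrow, hsum]; ring
    have hterm : ∀ j ∈ Finset.univ, 0 ≤ Mr n Q c j * (x j - mx) := by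
      intro j _
      by_cases hjc : j = c
      · subst hjc; rw [hc]; simp
      · have h1 : Mr n Q c j ≤ 0 := by
          have := hQ.1.2.1 c j (Ne.symm hjc)
          rw [Mr_apply]; exact_mod_cast this
        have h2 : x j - mx ≤ 0 := by
          have := hi0 j (Finset.mem_univ j); linarith
        nlinarith
    have := (Finset.sum_eq_zero_iff_of_nonneg hterm).1 hzero d (Finset.mem_univ d)
    have hMd : Mr n Q c d ≠ 0 := by
      simpa [Mr_apply] using (Int.cast_ne_zero (α := ℝ)).2 hd
    have : x d - mx = 0 := by
      rcases mul_eq_zero.1 this with h | h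
      · exact absurd h hMd
      · exact h
    linarith
  -- propagate along walks
  have walk : ∀ (c d : Fin (n+1))
      (_ : (SimpleGraph.fromRel (fun i j => Q i j ≠ 0)).Walk c d), x c = mx → x d = mx := by
    intro c d p
    induction p with
    | nil => exact fun h => h
    | @cons u v w h p ih =>
      intro hu
      apply ih
      rw [SimpleGraph.fromRel_adj] at h
      rcases h.2 with h' | h'
      · exact step u hu v h'
      · exact step u hu v (fun hz => h' (by rw [hQ.1.1 v u]; exact hz))
  have hall : ∀ c : Fin (n+1), x c = mx := by
    intro c
    obtain ⟨p⟩ := hQ.2 i0 c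
    exact walk i0 c p rfl
  rw [hall a, hall b]

/-- sum functional -/
noncomputable def sumF (n : ℕ) : (Fin (n+1) → ℝ) →ₗ[ℝ] ℝ where
  toFun x := ∑ i, x i
  map_add' x y := by simp [Finset.sum_add_distrib]
  map_smul' c x := by simp [Finset.mul_sum]

lemma exists_preimage (hQ : IsConnectedLaplacian n Q) (v : Fin (n+1) → ℝ)
    (hv : ∑ i, v i = 0) : ∃ w, Mr n Q *ᵥ w = v := by
  classical
  set f := (Mr n Q).mulVecLin with hf
  have hker : LinearMap.ker f = Submodule.span ℝ {(fun _ => 1 : Fin (n+1) → ℝ)} := by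
    apply le_antisymm
    · intro x hx
      rw [Submodule.mem_span_singleton]
      refine ⟨x 0, funext fun i => ?_⟩
      have := ker_const hQ x (by simpa [hf, Matrix.mulVecLin_apply] using hx) 0 i
      simp [this]
    · rw [Submodule.span_le, Set.singleton_subset_iff]
      have : f (fun _ => 1) = 0 := by
        funext i
        simp [hf, Matrix.mulVecLin_apply, Matrix.mulVec, dotProduct]
        exact rowSum hQ i
      simpa [LinearMap.mem_ker] using this
  have hone : (fun _ => 1 : Fin (n+1) → ℝ) ≠ 0 := by
    intro h; have := congrFun h 0; simp at this
  have hkerrank : Module.finrank ℝ (LinearMap.ker f) = 1 := by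
    rw [hker]; exact finrank_span_singleton hone
  have hdim : Module.finrank ℝ (Fin (n+1) → ℝ) = n + 1 := Module.finrank_fin_fun ℝ
  have hrange : Module.finrank ℝ (LinearMap.range f) = n := by
    have := LinearMap.finrank_range_add_finrank_ker f
    rw [hkerrank, hdim] at this
    omega
  have hsub : LinearMap.range f ≤ LinearMap.ker (sumF n) := by
    rintro _ ⟨w, rfl⟩
    have hfw : sumF n (f w) = ∑ i, ∑ j, Mr n Q i j * w j := by
      simp [sumF, hf, Matrix.mulVecLin_apply, Matrix.mulVec, dotProduct]
    rw [LinearMap.mem_ker, hfw, Finset.sum_comm]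
    apply Finset.sum_eq_zero
    intro j _
    rw [← Finset.sum_mul, colSum hQ j, zero_mul]
  have hgtop : LinearMap.range (sumF n) = ⊤ := by
    rw [LinearMap.range_eq_top]
    intro r
    refine ⟨Pi.single (0 : Fin (n+1)) r, ?_⟩
    simp [sumF]
  have hkerg : Module.finrank ℝ (LinearMap.ker (sumF n)) = n := by
    have := LinearMap.finrank_range_add_finrank_ker (sumF n)
    rw [hgtop, hdim] at this
    simp [finrank_top] at this
    omega
  have heq : LinearMap.range f = LinearMap.ker (sumF n) :=
    Submodule.eq_of_le_of_finrank_eq hsub (by rw [hrange, hkerg])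
  have hvmem : v ∈ LinearMap.ker (sumF n) := by
    simpa [LinearMap.mem_ker, sumF] using hv
  rw [← heq] at hvmem
  obtain ⟨w, hw⟩ := hvmem
  exact ⟨w, by simpa [hf, Matrix.mulVecLin_apply] using hw⟩



/-- indicator vector -/
noncomputable def indS (n : ℕ) (S : Finset (Fin (n+1))) : Fin (n+1) → ℝ :=
  fun i => if i ∈ S then 1 else 0

lemma indS_mem_Icc (S : Finset (Fin (n+1))) (i : Fin (n+1)) :
    0 ≤ indS n S i ∧ indS n S i ≤ 1 := by
  unfold indS; split <;> norm_num


lemma rowVec_eq (i : Fin (n+1)) : rowVec n Q i = Mr n Q i := rfl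

lemma uCut_eq_mulVec (hQ : IsConnectedLaplacian n Q) (S : Finset (Fin (n+1))) :
    uCut n Q S = Mr n Q *ᵥ indS n S := by
  funext j
  have : uCut n Q S j = ∑ i ∈ S, Mr n Q i j := by
    simp [uCut, rowVec, Finset.sum_apply, Mr_apply]
  rw [this]
  have hsymm : ∀ i, Mr n Q i j = Mr n Q j i := fun i => by
    simp [Mr_apply, hQ.1.1 i j]
  rw [Finset.sum_congr rfl fun i _ => hsymm i]
  simp only [Matrix.mulVec, dotProduct, indS, mul_ite, mul_one, mul_zero]
  rw [Finset.sum_ite_mem, Finset.univ_inter]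

lemma uCut_univ (hQ : IsConnectedLaplacian n Q) : uCut n Q Finset.univ = 0 := by
  funext j
  have : uCut n Q Finset.univ j = ∑ i, Mr n Q i j := by simp [uCut, rowVec, Finset.sum_apply, Mr_apply]
  rw [this, colSum hQ j]; rfl

lemma uCut_compl (hQ : IsConnectedLaplacian n Q) (S : Finset (Fin (n+1))) :
    uCut n Q Sᶜ = - uCut n Q S := by
  have h : uCut n Q S + uCut n Q Sᶜ = uCut n Q Finset.univ := by
    unfold uCut
    rw [Finset.sum_add_sum_compl]
  rw [uCut_univ hQ] at h
  linear_combination (norm := abel) h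

/-- injectivity core: if uCut S = uCut T with S,T proper nonempty then S = T -/
lemma uCut_injOn (hQ : IsConnectedLaplacian n Q) :
    Set.InjOn (uCut n Q) {S : Finset (Fin (n+1)) | S.Nonempty ∧ S ≠ Finset.univ} := by
  intro S hS T hT hST
  have hd : Mr n Q *ᵥ (indS n S - indS n T) = 0 := by
    rw [Matrix.mulVec_sub, ← uCut_eq_mulVec hQ, ← uCut_eq_mulVec hQ, hST, sub_self]
  have hconst := ker_const hQ _ hd
  by_contra hne
  -- find a point where indicators differ
  have : ∃ i, (i ∈ S ∧ i ∉ T) ∨ (i ∈ T ∧ i ∉ S) := by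
    by_contra h
    push_neg at h
    apply hne
    ext i
    have := h i
    tauto
  obtain ⟨i, hi⟩ := this
  rcases hi with ⟨hiS, hiT⟩ | ⟨hiT, hiS⟩
  · -- d i = 1, so d ≡ 1, so T = ∅
    have h1 : (indS n S - indS n T) i = 1 := by simp [indS, hiS, hiT]
    obtain ⟨j, hj⟩ := hT.1
    have h2 := hconst j i
    rw [h1] at h2
    have : indS n S j - indS n T j = 1 := h2
    have hTj : indS n T j = 1 := by simp [indS, hj]
    have hSj : indS n S j ≤ 1 := by unfold indS; split <;> norm_num
    rw [hTj] at this
    linarith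
  · have h1 : (indS n S - indS n T) i = -1 := by simp [indS, hiS, hiT]
    obtain ⟨j, hj⟩ := hS.1
    have h2 := hconst j i
    rw [h1] at h2
    have : indS n S j - indS n T j = -1 := h2
    have hSj : indS n S j = 1 := by simp [indS, hj]
    have hTj : indS n T j ≤ 1 := by unfold indS; split <;> norm_num
    rw [hSj] at this
    linarith

lemma uCut_ne_zero (hQ : IsConnectedLaplacian n Q) {S : Finset (Fin (n+1))}
    (hS : S.Nonempty) (hSu : S ≠ Finset.univ) : uCut n Q S ≠ 0 := by
  intro h
  have hd : Mr n Q *ᵥ indS n S = 0 := by rw [← uCut_eq_mulVec hQ, h]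
  have hconst := ker_const hQ _ hd
  obtain ⟨i, hi⟩ := hS
  obtain ⟨j, hj⟩ : ∃ j, j ∉ S := by
    by_contra h
    push_neg at h
    exact hSu (Finset.eq_univ_iff_forall.2 h)
  have := hconst i j
  simp [indS, hi, hj] at this

/-- separation: for proper nonempty S there is w with w ⬝ᵥ uCut T < w ⬝ᵥ uCut S for T ≠ S -/
lemma exists_sep (hQ : IsConnectedLaplacian n Q) {S : Finset (Fin (n+1))}
    (hS : S.Nonempty) (hSu : S ≠ Finset.univ) :
    ∃ w : Fin (n+1) → ℝ, ∀ T : Finset (Fin (n+1)), T.Nonempty → T ≠ S →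
      w ⬝ᵥ uCut n Q T < w ⬝ᵥ uCut n Q S := by
  classical
  set v : Fin (n+1) → ℝ := fun i => if i ∈ S then (Sᶜ.card : ℝ) else -(S.card : ℝ) with hv
  have hvS : ∀ i ∈ S, v i = (Sᶜ.card : ℝ) := fun i hi => by simp [hv, hi]
  have hvSc : ∀ i ∉ S, v i = -(S.card : ℝ) := fun i hi => by simp [hv, hi]
  have hcardS : (0:ℝ) < S.card := by exact_mod_cast Finset.card_pos.2 hS
  have hcardSc : (0:ℝ) < Sᶜ.card := by
    have : Sᶜ.Nonempty := by
      rw [Finset.nonempty_iff_ne_empty]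
      intro h
      exact hSu ((Finset.compl_eq_empty_iff S).1 h)
    exact_mod_cast Finset.card_pos.2 this
  have hsum : ∑ i, v i = 0 := by
    rw [← Finset.sum_add_sum_compl S]
    rw [Finset.sum_congr rfl hvS, Finset.sum_congr rfl (fun i hi => hvSc i (Finset.mem_compl.1 hi))]
    rw [Finset.sum_const, Finset.sum_const, nsmul_eq_mul, nsmul_eq_mul]
    ring
  obtain ⟨w, hw⟩ := exists_preimage hQ v hsum
  refine ⟨w, fun T hT hTS => ?_⟩
  have key : ∀ U : Finset (Fin (n+1)), w ⬝ᵥ uCut n Q U = ∑ i ∈ U, v i := by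
    intro U
    have : w ⬝ᵥ uCut n Q U = ∑ j, w j * ∑ i ∈ U, Mr n Q i j := by
      simp [dotProduct, uCut, rowVec, Finset.sum_apply, Mr_apply]
    rw [this]
    have h2 : ∑ j, w j * ∑ i ∈ U, Mr n Q i j = ∑ j, ∑ i ∈ U, w j * Mr n Q i j :=
      Finset.sum_congr rfl fun j _ => Finset.mul_sum _ _ _
    rw [h2, Finset.sum_comm]
    rw [Finset.sum_congr rfl (fun i (_ : i ∈ U) =>
      Finset.sum_congr rfl (fun j (_ : j ∈ Finset.univ) => mul_comm (w j) (Mr n Q i j)))]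
    exact Finset.sum_congr rfl fun i _ => by
      have := congrFun hw i
      simpa [Matrix.mulVec, dotProduct] using this
  rw [key S, key T]
  -- now combinatorial inequality
  have hsplit : ∀ U : Finset (Fin (n+1)), ∑ i ∈ U, v i = ∑ i ∈ U ∩ S, v i + ∑ i ∈ U \ S, v i := by
    intro U
    rw [Finset.sum_inter_add_sum_sdiff]
  rw [hsplit T, hsplit S]
  have hSS : S ∩ S = S := Finset.inter_self S
  have hSd : S \ S = ∅ := Finset.sdiff_self S
  rw [hSS, hSd, Finset.sum_empty, add_zero]
  have h1 : ∑ i ∈ T \ S, v i ≤ 0 := by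
    apply Finset.sum_nonpos
    intro i hi
    rw [hvSc i (Finset.mem_sdiff.1 hi).2]
    linarith
  have h2 : ∑ i ∈ T ∩ S, v i ≤ ∑ i ∈ S, v i := by
    apply Finset.sum_le_sum_of_subset_of_nonneg (Finset.inter_subset_right)
    intro i hi _
    rw [hvS i hi]
    linarith
  -- strictness
  rcases Finset.eq_empty_or_nonempty (T \ S) with hTd | hTd
  · -- then T ⊆ S and T ≠ S so T ∩ S = T ⊊ S
    have hTsub : T ⊆ S := by
      intro i hi
      by_contra h
      exact (Finset.eq_empty_iff_forall_notMem.1 hTd i) (Finset.mem_sdiff.2 ⟨hi, h⟩)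
    have hTS' : T ∩ S = T := Finset.inter_eq_left.2 hTsub
    rw [hTd, Finset.sum_empty, add_zero, hTS']
    obtain ⟨j, hjS, hjT⟩ : ∃ j, j ∈ S ∧ j ∉ T := by
      by_contra h
      push_neg at h
      exact hTS (Finset.Subset.antisymm hTsub (fun i hi => h i hi))
    calc ∑ i ∈ T, v i ≤ ∑ i ∈ S \ {j}, v i := by
          apply Finset.sum_le_sum_of_subset_of_nonneg
          · intro i hi
            refine Finset.mem_sdiff.2 ⟨hTsub hi, fun hh => hjT ?_⟩
            rw [Finset.mem_singleton] at hh
            rwa [hh] at hi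
          · intro i hi _
            rw [hvS i (Finset.mem_sdiff.1 hi).1]; linarith
      _ < ∑ i ∈ S, v i := by
          have : ∑ i ∈ S, v i = ∑ i ∈ S \ {j}, v i + v j := by
            rw [Finset.sum_eq_sum_sdiff_singleton_add hjS]
          rw [this]
          have : 0 < v j := by rw [hvS j hjS]; exact hcardSc
          linarith
  · have h1' : ∑ i ∈ T \ S, v i < 0 := by
      apply Finset.sum_neg
      · intro i hi
        rw [hvSc i (Finset.mem_sdiff.1 hi).2]
        linarith
      · exact hTd
    linarith



lemma uPerm_eq_uCut (σ : Equiv.Perm (Fin (n+1))) (k : Fin (n+1)) :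
    uPerm n Q σ k = uCut n Q ((Finset.Iic k).image σ) := by
  unfold uPerm uCut
  rw [Finset.sum_image (fun a _ b _ h => σ.injective h)]

lemma sum_rowVec_zero (hQ : IsConnectedLaplacian n Q) :
    ∑ i, rowVec n Q i = 0 := by
  funext j
  rw [Finset.sum_apply]
  exact colSum hQ j

lemma HDel_subset_conv (hQ : IsConnectedLaplacian n Q) :
    HDel n Q ⊆ convexHull ℝ (uCut n Q '' {S : Finset (Fin (n+1)) | S.Nonempty}) := by
  apply Set.iUnion_subset
  intro σ
  apply convexHull_mono
  rintro _ ⟨k, rfl⟩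
  refine ⟨(Finset.Iic k).image σ, ?_, (uPerm_eq_uCut σ k).symm⟩
  exact Finset.Nonempty.image ⟨k, Finset.mem_Iic.2 le_rfl⟩ σ

lemma mem_HDel_of_box (hQ : IsConnectedLaplacian n Q) (y : Fin (n+1) → ℝ)
    (hy0 : ∀ i, 0 ≤ y i) (hy1 : ∀ i, y i ≤ 1) :
    Mr n Q *ᵥ y ∈ HDel n Q := by
  classical
  set σ := Tuple.sort (fun i => -y i) with hσ
  have hmono : Monotone ((fun i => -y i) ∘ σ) := Tuple.monotone_sort _
  have hanti : ∀ j k : Fin (n+1), j ≤ k → y (σ k) ≤ y (σ j) := by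
    intro j k hjk
    have := hmono hjk
    simp only [Function.comp_apply, neg_le_neg_iff] at this
    exact this
  set z : Fin (n+1) → ℝ := fun k => y (σ k) with hz
  set c : Fin (n+1) → ℝ := fun k =>
    if h : (k : ℕ) < n then z k - z ⟨(k:ℕ)+1, by omega⟩ else 1 - z 0 + z k with hc
  have hc0 : ∀ k, 0 ≤ c k := by
    intro k
    by_cases h : (k:ℕ) < n
    · have hle : k ≤ (⟨(k:ℕ)+1, by omega⟩ : Fin (n+1)) := by
        rw [Fin.le_def]; simp
      have := hanti k ⟨(k:ℕ)+1, by omega⟩ hle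
      simp only [hc, dif_pos h, hz]
      linarith
    · simp only [hc, dif_neg h]
      have h1 : z 0 ≤ 1 := hy1 _
      have h2 : 0 ≤ z k := hy0 _
      linarith
  have hIio : ∀ j : Fin (n+1), ∑ k ∈ Finset.Iio j, c k = z 0 - z j := by
    intro j
    induction j using Fin.induction with
    | zero =>
      rw [show Finset.Iio (0 : Fin (n+1)) = ∅ by ext m; simp, Finset.sum_empty]
      ring
    | succ i ih =>
      have hins : Finset.Iio (i.succ) = insert i.castSucc (Finset.Iio i.castSucc) := by
        ext m
        simp only [Finset.mem_Iio, Finset.mem_insert, Fin.lt_def, Fin.ext_iff,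
          Fin.val_succ, Fin.coe_castSucc]
        omega
      rw [hins, Finset.sum_insert (by simp only [Finset.mem_Iio]; exact lt_irrefl _), ih]
      have hci : c i.castSucc = z i.castSucc - z i.succ := by
        have hlt : ((i.castSucc : Fin (n+1)) : ℕ) < n := by
          simp only [Fin.coe_castSucc]; exact i.isLt
        have : (⟨((i.castSucc : Fin (n+1)) : ℕ)+1, by omega⟩ : Fin (n+1)) = i.succ := by
          apply Fin.ext; simp
        simp only [hc, dif_pos hlt, this]
      rw [hci]; ring
  have huniv : ∑ k, c k = 1 := by
    have hlast : (Finset.univ : Finset (Fin (n+1))) =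
        insert (Fin.last n) (Finset.Iio (Fin.last n)) := by
      ext m
      simp only [Finset.mem_univ, Finset.mem_insert, Finset.mem_Iio, true_iff,
        Fin.lt_def, Fin.ext_iff, Fin.val_last]
      omega
    rw [hlast, Finset.sum_insert (by simp only [Finset.mem_Iio]; exact lt_irrefl _), hIio]
    have hcl : c (Fin.last n) = 1 - z 0 + z (Fin.last n) := by
      have : ¬ ((Fin.last n : Fin (n+1)) : ℕ) < n := by simp [Fin.val_last]
      simp only [hc, dif_neg this]
    rw [hcl]; ring
  have hIci : ∀ j : Fin (n+1), ∑ k ∈ Finset.Ici j, c k = 1 - z 0 + z j := by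
    intro j
    have : Finset.Ici j = Finset.univ \ Finset.Iio j := by
      ext m; simp [Finset.mem_Ici, Finset.mem_Iio, not_lt]
    rw [this, Finset.sum_sdiff_eq_sub (Finset.subset_univ _), huniv, hIio]
    ring
  have swap : ∀ (g : Fin (n+1) → Fin (n+1) → (Fin (n+1) → ℝ)),
      ∑ k, ∑ j ∈ Finset.Iic k, g k j = ∑ j, ∑ k ∈ Finset.Ici j, g k j := by
    intro g
    have e1 : ∀ k : Fin (n+1), ∑ j ∈ Finset.Iic k, g k j
        = ∑ j, if j ≤ k then g k j else 0 := by
      intro k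
      rw [← Finset.sum_filter]
      congr 1
      ext m; simp [Finset.mem_Iic]
    have e2 : ∀ j : Fin (n+1), ∑ k ∈ Finset.Ici j, g k j
        = ∑ k, if j ≤ k then g k j else 0 := by
      intro j
      rw [← Finset.sum_filter]
      congr 1
      ext m; simp [Finset.mem_Ici]
    rw [Finset.sum_congr rfl fun k _ => e1 k, Finset.sum_comm]
    exact (Finset.sum_congr rfl fun j _ => (e2 j).symm).symm ▸ rfl
  have hmain : ∑ k, c k • uPerm n Q σ k = Mr n Q *ᵥ y := by
    have h1 : ∑ k, c k • uPerm n Q σ k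
        = ∑ k, ∑ j ∈ Finset.Iic k, c k • rowVec n Q (σ j) := by
      refine Finset.sum_congr rfl fun k _ => ?_
      unfold uPerm
      rw [Finset.smul_sum]
    rw [h1, swap (fun k j => c k • rowVec n Q (σ j))]
    have h3 : ∀ j : Fin (n+1), ∑ k ∈ Finset.Ici j, c k • rowVec n Q (σ j)
        = (1 - z 0 + z j) • rowVec n Q (σ j) := by
      intro j
      rw [← Finset.sum_smul, hIci]
    rw [Finset.sum_congr rfl fun j _ => h3 j]
    have h4 : ∑ j, (1 - z 0 + z j) • rowVec n Q (σ j)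
        = (∑ j, z j • rowVec n Q (σ j)) + (1 - z 0) • ∑ j, rowVec n Q (σ j) := by
      rw [Finset.smul_sum, ← Finset.sum_add_distrib]
      refine Finset.sum_congr rfl fun j _ => ?_
      rw [show (1 - z 0 + z j) = z j + (1 - z 0) by ring, add_smul]
    rw [h4]
    have h5 : ∑ j, rowVec n Q (σ j) = 0 := by
      rw [Equiv.sum_comp σ (rowVec n Q)]
      exact sum_rowVec_zero hQ
    rw [h5, smul_zero, add_zero]
    have h6 : ∑ j, z j • rowVec n Q (σ j) = ∑ i, y i • rowVec n Q i :=
      Equiv.sum_comp σ (fun i => y i • rowVec n Q i)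
    rw [h6]
    funext jj
    rw [Finset.sum_apply]
    have hterm : ∀ i, (y i • rowVec n Q i) jj = Mr n Q jj i * y i := by
      intro i
      show y i * (Q i jj : ℝ) = (Q jj i : ℝ) * y i
      rw [hQ.1.1 i jj]; ring
    rw [Finset.sum_congr rfl fun i _ => hterm i]
    rfl
  have hmem : ∑ k, c k • uPerm n Q σ k ∈ convexHull ℝ (Set.range (uPerm n Q σ)) := by
    have hcm := Finset.centerMass_mem_convexHull (Finset.univ : Finset (Fin (n+1)))
      (w := c) (fun k _ => hc0 k) (by rw [huniv]; norm_num)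
      (z := uPerm n Q σ) (fun k _ => Set.mem_range_self k)
    rwa [Finset.centerMass_eq_of_sum_1 _ _ huniv] at hcm
  rw [← hmain]
  exact Set.mem_iUnion.2 ⟨σ, hmem⟩

lemma conv_subset_HDel (hQ : IsConnectedLaplacian n Q) :
    convexHull ℝ (uCut n Q '' {S : Finset (Fin (n+1)) | S.Nonempty}) ⊆ HDel n Q := by
  intro x hx
  have hx2 : x ∈ convexHull ℝ ((Mr n Q).mulVecLin ''
      (indS n '' {S : Finset (Fin (n+1)) | S.Nonempty})) := by
    refine convexHull_mono ?_ hx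
    rintro _ ⟨S, hS, rfl⟩
    exact ⟨indS n S, ⟨S, hS, rfl⟩, by rw [Matrix.mulVecLin_apply, ← uCut_eq_mulVec hQ]⟩
  rw [← LinearMap.image_convexHull] at hx2
  obtain ⟨y, hy, rfl⟩ := hx2
  have hbox : ∀ i, 0 ≤ y i ∧ y i ≤ 1 := by
    have hconv : Convex ℝ {v : Fin (n+1) → ℝ | ∀ i, 0 ≤ v i ∧ v i ≤ 1} := by
      intro p hp q hq a b ha hb hab
      intro i
      have h1 := (hp i).1; have h2 := (hp i).2
      have h3 := (hq i).1; have h4 := (hq i).2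
      have : (a • p + b • q) i = a * p i + b * q i := rfl
      rw [Set.mem_setOf_eq] at *
      constructor
      · rw [this]; nlinarith
      · rw [this]; nlinarith
    have hsub : convexHull ℝ (indS n '' {S : Finset (Fin (n+1)) | S.Nonempty})
        ⊆ {v | ∀ i, 0 ≤ v i ∧ v i ≤ 1} := by
      apply convexHull_min
      · rintro _ ⟨S, _, rfl⟩
        exact fun i => indS_mem_Icc S i
      · exact hconv
    exact hsub hy
  have := mem_HDel_of_box hQ y (fun i => (hbox i).1) (fun i => (hbox i).2)
  simpa [Matrix.mulVecLin_apply] using this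

lemma HDel_eq (hQ : IsConnectedLaplacian n Q) :
    HDel n Q = convexHull ℝ (uCut n Q '' {S : Finset (Fin (n+1)) | S.Nonempty}) :=
  subset_antisymm (HDel_subset_conv hQ) (conv_subset_HDel hQ)


lemma dot_linear (w : Fin (n+1) → ℝ) :
    IsLinearMap ℝ (fun x : Fin (n+1) → ℝ => w ⬝ᵥ x) := by
  constructor
  · intro x y; exact dotProduct_add w x y
  · intro c x
    simp only [dotProduct, Pi.smul_apply, smul_eq_mul, Finset.mul_sum]
    exact Finset.sum_congr rfl fun i _ => by ring

lemma uCut_mem_extreme (hQ : IsConnectedLaplacian n Q) {S : Finset (Fin (n+1))}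
    (hS : S.Nonempty) (hSu : S ≠ Finset.univ) :
    uCut n Q S ∈ Set.extremePoints ℝ (HDel n Q) := by
  classical
  rw [HDel_eq hQ]
  obtain ⟨w, hw⟩ := exists_sep hQ hS hSu
  set F : Set (Fin (n+1) → ℝ) := uCut n Q '' {T : Finset (Fin (n+1)) | T.Nonempty} with hF
  set L : (Fin (n+1) → ℝ) → ℝ := fun x => w ⬝ᵥ x with hL
  have hlin : IsLinearMap ℝ L := dot_linear w
  set cS : ℝ := L (uCut n Q S) with hcS
  have hF_le : ∀ p ∈ F, L p ≤ cS := by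
    rintro _ ⟨T, hT, rfl⟩
    by_cases hTS : T = S
    · subst hTS; exact le_rfl
    · exact le_of_lt (hw T hT hTS)
  have hhull_le : ∀ p ∈ convexHull ℝ F, L p ≤ cS := fun p hp =>
    convexHull_min hF_le (convex_halfSpace_le hlin cS) hp
  have huniq : ∀ p ∈ convexHull ℝ F, L p = cS → p = uCut n Q S := by
    set F' : Set (Fin (n+1) → ℝ) :=
      uCut n Q '' {T : Finset (Fin (n+1)) | T.Nonempty ∧ T ≠ S} with hF'
    have hFins : F = insert (uCut n Q S) F' := by
      ext p
      constructor
      · rintro ⟨T, hT, rfl⟩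
        by_cases hTS : T = S
        · subst hTS; exact Set.mem_insert _ _
        · exact Set.mem_insert_of_mem _ ⟨T, ⟨hT, hTS⟩, rfl⟩
      · rintro (rfl | ⟨T, hT, rfl⟩)
        · exact ⟨S, hS, rfl⟩
        · exact ⟨T, hT.1, rfl⟩
    have huS : Finset.univ ≠ S := fun h => hSu h.symm
    have hF'ne : F'.Nonempty :=
      ⟨uCut n Q Finset.univ, Finset.univ, ⟨Finset.univ_nonempty, huS⟩, rfl⟩
    set 𝒯 : Finset (Finset (Fin (n+1))) :=
      Finset.univ.filter (fun T => T.Nonempty ∧ T ≠ S) with h𝒯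
    have h𝒯ne : 𝒯.Nonempty := by
      refine ⟨Finset.univ, ?_⟩
      rw [h𝒯, Finset.mem_filter]
      exact ⟨Finset.mem_univ _, Finset.univ_nonempty, huS⟩
    set m : ℝ := 𝒯.sup' h𝒯ne (fun T => L (uCut n Q T)) with hm
    have hmlt : m < cS := by
      rw [hm, Finset.sup'_lt_iff h𝒯ne]
      intro T hT
      rw [h𝒯, Finset.mem_filter] at hT
      exact hw T hT.2.1 hT.2.2
    have hF'le : ∀ p ∈ convexHull ℝ F', L p ≤ m := by
      refine fun p hp => convexHull_min ?_ (convex_halfSpace_le hlin m) hp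
      rintro _ ⟨T, ⟨hT1, hT2⟩, rfl⟩
      refine Finset.le_sup' (fun T => L (uCut n Q T)) ?_
      rw [h𝒯, Finset.mem_filter]
      exact ⟨Finset.mem_univ _, hT1, hT2⟩
    intro p hp hpc
    rw [hFins, convexHull_insert hF'ne, mem_convexJoin] at hp
    obtain ⟨a, ha, q, hq, hpseg⟩ := hp
    rw [Set.mem_singleton_iff] at ha
    subst ha
    obtain ⟨t1, t2, ht1, ht2, hsum, rfl⟩ := hpseg
    have hq' : L q ≤ m := hF'le q hq
    have heval : L (t1 • uCut n Q S + t2 • q) = t1 * cS + t2 * L q := by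
      rw [hlin.map_add, hlin.map_smul, hlin.map_smul]
      simp [hcS, smul_eq_mul]
    rw [heval] at hpc
    have ht2z : t2 = 0 := by
      by_contra hz
      have hpos : 0 < t2 := lt_of_le_of_ne ht2 (Ne.symm hz)
      have h1 : t1 = 1 - t2 := by linarith
      rw [h1] at hpc
      have h2 : t2 * L q = t2 * cS := by nlinarith
      have h3 : t2 * L q ≤ t2 * m := mul_le_mul_of_nonneg_left hq' ht2
      have h4 : t2 * m < t2 * cS := mul_lt_mul_of_pos_left hmlt hpos
      linarith
    rw [ht2z, add_zero] at hsum
    rw [ht2z, hsum, one_smul, zero_smul, add_zero]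
  rw [mem_extremePoints]
  refine ⟨subset_convexHull ℝ F ⟨S, hS, rfl⟩, ?_⟩
  intro x₁ hx₁ x₂ hx₂ hseg
  obtain ⟨a, b, ha, hb, hab, habeq⟩ := hseg
  have h1 := hhull_le x₁ hx₁
  have h2 := hhull_le x₂ hx₂
  have e : a * L x₁ + b * L x₂ = cS := by
    have : L (a • x₁ + b • x₂) = a * L x₁ + b * L x₂ := by
      rw [hlin.map_add, hlin.map_smul, hlin.map_smul]; simp [smul_eq_mul]
    rw [← this, habeq]
  have habc : a * cS + b * cS = cS := by rw [← add_mul, hab, one_mul]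
  have hL1 : L x₁ = cS := by
    by_contra hz
    have h1' : L x₁ < cS := lt_of_le_of_ne h1 hz
    have hm1 := mul_lt_mul_of_pos_left h1' ha
    have hm2 := mul_le_mul_of_nonneg_left h2 (le_of_lt hb)
    linarith
  have hL2 : L x₂ = cS := by
    by_contra hz
    have h2' : L x₂ < cS := lt_of_le_of_ne h2 hz
    have hm1 := mul_le_mul_of_nonneg_left h1 (le_of_lt ha)
    have hm2 := mul_lt_mul_of_pos_left h2' hb
    linarith
  exact ⟨huniq x₁ hx₁ hL1, huniq x₂ hx₂ hL2⟩

lemma zero_not_extreme (hn : 1 ≤ n) (hQ : IsConnectedLaplacian n Q) :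
    (0 : Fin (n+1) → ℝ) ∉ Set.extremePoints ℝ (HDel n Q) := by
  intro h
  classical
  set S0 : Finset (Fin (n+1)) := {0} with hS0def
  have hS0 : S0.Nonempty := ⟨0, Finset.mem_singleton_self 0⟩
  have hj : (⟨1, by omega⟩ : Fin (n+1)) ∉ S0 := by
    rw [hS0def, Finset.mem_singleton]
    intro hh
    have := congrArg Fin.val hh
    simp at this
  have hS0u : S0 ≠ Finset.univ := fun hh => hj (hh ▸ Finset.mem_univ _)
  have hne := uCut_ne_zero hQ hS0 hS0u
  have hS0c : (S0ᶜ).Nonempty := ⟨⟨1, by omega⟩, Finset.mem_compl.2 hj⟩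
  have ha : uCut n Q S0 ∈ HDel n Q := by
    rw [HDel_eq hQ]; exact subset_convexHull ℝ _ ⟨S0, hS0, rfl⟩
  have hb : uCut n Q S0ᶜ ∈ HDel n Q := by
    rw [HDel_eq hQ]; exact subset_convexHull ℝ _ ⟨S0ᶜ, hS0c, rfl⟩
  have hseg : (0 : Fin (n+1) → ℝ) ∈ openSegment ℝ (uCut n Q S0) (uCut n Q S0ᶜ) := by
    refine ⟨1/2, 1/2, by norm_num, by norm_num, by norm_num, ?_⟩
    rw [uCut_compl hQ, smul_neg, add_neg_cancel]
  rw [mem_extremePoints] at h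
  exact hne (h.2 _ ha _ hb hseg).1

end DelAux


end DelAuxSection

/-- the extreme points of the Delaunay polytope of the origin are
exactly the points `u_S` for nonempty proper `S ⊊ V`, the map `S ↦ u_S` is
injective on these subsets, and there are exactly `2^{n+1} - 2` extreme points. -/

theorem extreme_points_of_delaunay_polytope (n : ℕ) (hn : 1 ≤ n)
    (Q : Matrix (Fin (n+1)) (Fin (n+1)) ℤ) (hQ : IsConnectedLaplacian n Q) :
    Set.extremePoints ℝ (HDel n Q) =
        {x | ∃ S : Finset (Fin (n+1)), S.Nonempty ∧ S ≠ Finset.univ ∧ x = uCut n Q S} ∧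
    Set.InjOn (uCut n Q) {S : Finset (Fin (n+1)) | S.Nonempty ∧ S ≠ Finset.univ} ∧
    (Set.extremePoints ℝ (HDel n Q)).ncard = 2 ^ (n + 1) - 2 := by
  classical
  have hinj := DelAux.uCut_injOn (n := n) (Q := Q) hQ
  have hext : Set.extremePoints ℝ (HDel n Q) =
      {x | ∃ S : Finset (Fin (n+1)), S.Nonempty ∧ S ≠ Finset.univ ∧ x = uCut n Q S} := by
    ext x
    constructor
    · intro hx
      have hxF : x ∈ uCut n Q '' {S : Finset (Fin (n+1)) | S.Nonempty} := by
        have hx' := hx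
        rw [DelAux.HDel_eq hQ] at hx'
        exact extremePoints_convexHull_subset hx'
      obtain ⟨S, hS, rfl⟩ := hxF
      by_cases hSu : S = Finset.univ
      · exfalso
        subst hSu
        rw [DelAux.uCut_univ hQ] at hx
        exact DelAux.zero_not_extreme hn hQ hx
      · exact ⟨S, hS, hSu, rfl⟩
    · rintro ⟨S, hS, hSu, rfl⟩
      exact DelAux.uCut_mem_extreme hQ hS hSu
  refine ⟨hext, hinj, ?_⟩
  rw [hext]
  have himg : {x | ∃ S : Finset (Fin (n+1)), S.Nonempty ∧ S ≠ Finset.univ ∧ x = uCut n Q S}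
      = uCut n Q '' {S : Finset (Fin (n+1)) | S.Nonempty ∧ S ≠ Finset.univ} := by
    ext x
    constructor
    · rintro ⟨S, h1, h2, rfl⟩; exact ⟨S, ⟨h1, h2⟩, rfl⟩
    · rintro ⟨S, ⟨h1, h2⟩, rfl⟩; exact ⟨S, h1, h2, rfl⟩
  rw [himg, Set.ncard_image_of_injOn hinj]
  have hsetfin : {S : Finset (Fin (n+1)) | S.Nonempty ∧ S ≠ Finset.univ} =
      ↑((Finset.univ : Finset (Finset (Fin (n+1)))) \ {∅, Finset.univ}) := by
    ext S
    rw [Set.mem_setOf_eq, Finset.mem_coe, Finset.mem_sdiff]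
    simp only [Finset.mem_univ, true_and, Finset.mem_insert, Finset.mem_singleton, not_or]
    rw [Finset.nonempty_iff_ne_empty]
  rw [hsetfin, Set.ncard_coe_finset]
  rw [Finset.card_sdiff_of_subset (Finset.subset_univ _)]
  have hcard2 : ({∅, Finset.univ} : Finset (Finset (Fin (n+1)))).card = 2 := by
    rw [Finset.card_insert_of_notMem, Finset.card_singleton]
    simp only [Finset.mem_singleton]
    intro h
    exact Finset.univ_nonempty.ne_empty h.symm
  rw [hcard2, Finset.card_univ, Fintype.card_finset, Fintype.card_fin]
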